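/- (Delsarte bound) Let C be a linear code of length n over Z4 and let s(C⊥) be the number of distinct nonzero integers i such that some codeword of the dual code C⊥ has Lee weight i. Then the Lee covering radius satisfies r_L(C) ≤ s(C⊥). -/

import Mathlib

open Polynomial Complex


/-- The Lee weight on `ZMod 4`: `w_L(0)=0, w_L(1)=1, w_L(2)=2, w_L(3)=1`. -/
def leeWt (x : ZMod 4) : ℕ := min x.val (4 - x.val)

/-- The Euclidean weight on `ZMod 4`: `w_E(0)=0, w_E(1)=1, w_E(2)=4, w_E(3)=1`. -/
def euclWt (x : ZMod 4) : ℕ := (min x.val (4 - x.val)) ^ 2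

/-- The Lee distance between two vectors over `ZMod 4`. -/
def dLee {ι : Type*} [Fintype ι] (x y : ι → ZMod 4) : ℕ := ∑ i, leeWt (x i - y i)

/-- The Euclidean distance between two vectors over `ZMod 4`. -/
def dEucl {ι : Type*} [Fintype ι] (x y : ι → ZMod 4) : ℕ := ∑ i, euclWt (x i - y i)

/-- The covering radius of a code over `ZMod 4` with respect to the Lee distance. -/
noncomputable def covRadLee {ι : Type*} [Fintype ι] (C : Set (ι → ZMod 4)) : ℕ :=
  sSup (Set.range fun u : ι → ZMod 4 => sInf (dLee u '' C))

/-- The covering radius of a code over `ZMod 4` with respect to the Euclidean distance. -/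
noncomputable def covRadEucl {ι : Type*} [Fintype ι] (C : Set (ι → ZMod 4)) : ℕ :=
  sSup (Set.range fun u : ι → ZMod 4 => sInf (dEucl u '' C))

/-- The dual code of a code over `ZMod 4`, with respect to the standard inner product. -/
def dualCode {ι : Type*} [Fintype ι] (C : Set (ι → ZMod 4)) : Set (ι → ZMod 4) :=
  {x | ∀ c ∈ C, ∑ i, x i * c i = 0}

noncomputable section DelsarteAux

def chi (a : ZMod 4) : ℂ := Complex.I ^ a.val

lemma I_pow_mod (k : ℕ) : Complex.I ^ (k % 4) = Complex.I ^ k := by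
  conv_rhs => rw [← Nat.div_add_mod k 4]
  rw [pow_add, pow_mul, Complex.I_pow_four, one_pow, one_mul]

lemma chi_add (a b : ZMod 4) : chi (a + b) = chi a * chi b := by
  unfold chi; rw [ZMod.val_add, I_pow_mod, pow_add]

lemma chi_zero : chi 0 = 1 := by simp [chi]

lemma chi_ne_one {a : ZMod 4} (h : a ≠ 0) : chi a ≠ 1 := by
  fin_cases a
  · exact absurd rfl h
  · show Complex.I ^ 1 ≠ 1
    simp [Complex.ext_iff]
  · show Complex.I ^ 2 ≠ 1
    rw [Complex.I_sq]; norm_num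
  · show Complex.I ^ 3 ≠ 1
    rw [pow_succ, Complex.I_sq]; simp [Complex.ext_iff]

lemma chi_sum {ι : Type*} (s : Finset ι) (f : ι → ZMod 4) :
    chi (∑ j ∈ s, f j) = ∏ j ∈ s, chi (f j) := by
  induction s using Finset.cons_induction with
  | empty => simp [chi_zero]
  | cons a s ha ih => rw [Finset.sum_cons, Finset.prod_cons, chi_add, ih]

lemma leeWt_le_two : ∀ b : ZMod 4, leeWt b ≤ 2 := by decide

lemma leeWt_eq_zero {b : ZMod 4} (h : leeWt b = 0) : b = 0 := by revert h; revert b; decide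

lemma zmod4_sum {M : Type*} [AddCommMonoid M] (f : ZMod 4 → M) :
    ∑ a, f a = f 0 + f 1 + f 2 + f 3 := Fin.sum_univ_four f

lemma coord_sum (b : ZMod 4) :
    (∑ a : ZMod 4, Polynomial.C (chi (b * a)) * (X : Polynomial ℂ) ^ leeWt a)
      = (1 + X) ^ (2 - leeWt b) * (1 - X) ^ leeWt b := by
  have hCI : (Polynomial.C Complex.I) ^ 2 = -1 := by
    rw [← Polynomial.C_pow, Complex.I_sq]; simp
  have hCI3 : (Polynomial.C Complex.I) ^ 3 = -(Polynomial.C Complex.I) := by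
    rw [← Polynomial.C_pow, show Complex.I ^ 3 = -Complex.I by rw [pow_succ, Complex.I_sq]; ring]
    simp
  have hb : b = 0 ∨ b = 1 ∨ b = 2 ∨ b = 3 := by
    have := (by decide : ∀ c : ZMod 4, c = 0 ∨ c = 1 ∨ c = 2 ∨ c = 3); exact this b
  rcases hb with rfl | rfl | rfl | rfl <;>
    rw [zmod4_sum] <;>
    norm_num [chi, leeWt, show ((0:ZMod 4)).val = 0 from rfl, show ((1:ZMod 4)).val = 1 from rfl,
      show ((2:ZMod 4)).val = 2 from rfl, show ((3:ZMod 4)).val = 3 from rfl,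
      show ((4:ZMod 4)).val = 0 from rfl, show ((6:ZMod 4)).val = 2 from rfl,
      show ((9:ZMod 4)).val = 1 from rfl, show ((2:ZMod 4)) * 2 = 0 from rfl,
      show ((2:ZMod 4)) * 3 = 2 from rfl, show ((3:ZMod 4)) * 2 = 2 from rfl,
      show ((3:ZMod 4)) * 3 = 1 from rfl, hCI, hCI3] <;>
    ring_nf

/-- Product formula over all coordinates. -/
lemma prod_form (n : ℕ) (y : Fin n → ZMod 4) :
    (∑ v : Fin n → ZMod 4,
        Polynomial.C (chi (∑ j, y j * v j)) * (X : Polynomial ℂ) ^ (∑ j, leeWt (v j)))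
      = (1 + X) ^ (2 * n - ∑ j, leeWt (y j)) * (1 - X) ^ (∑ j, leeWt (y j)) := by
  have lhs : (∑ v : Fin n → ZMod 4,
        Polynomial.C (chi (∑ j, y j * v j)) * (X : Polynomial ℂ) ^ (∑ j, leeWt (v j)))
      = ∏ j, (∑ a : ZMod 4, Polynomial.C (chi (y j * a)) * (X : Polynomial ℂ) ^ leeWt a) := by
    rw [Finset.prod_univ_sum]
    rw [Fintype.piFinset_univ]
    apply Finset.sum_congr rfl
    intro v _
    rw [Finset.prod_mul_distrib, ← map_prod, ← chi_sum, Finset.prod_pow_eq_pow_sum]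
  rw [lhs]
  have rhs : ∀ j : Fin n, (∑ a : ZMod 4, Polynomial.C (chi (y j * a)) * (X : Polynomial ℂ) ^ leeWt a)
      = (1 + X) ^ (2 - leeWt (y j)) * (1 - X) ^ leeWt (y j) := fun j => coord_sum (y j)
  rw [Finset.prod_congr rfl (fun j _ => rhs j), Finset.prod_mul_distrib,
    Finset.prod_pow_eq_pow_sum, Finset.prod_pow_eq_pow_sum]
  congr 1
  congr 1
  have h1 : (∑ i : Fin n, (2 - leeWt (y i))) + ∑ j : Fin n, leeWt (y j) = 2 * n := by
    rw [← Finset.sum_add_distrib]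
    have : ∀ i : Fin n, (2 - leeWt (y i)) + leeWt (y i) = 2 := fun i =>
      Nat.sub_add_cancel (leeWt_le_two (y i))
    rw [Finset.sum_congr rfl (fun i _ => this i)]
    simp [Finset.sum_const, Finset.card_univ, mul_comm]
  omega

/-- The operator `p ↦ X * p'` as a linear endomorphism of `ℂ[X]`. -/
noncomputable def theta : Module.End ℂ (Polynomial ℂ) :=
  (LinearMap.mulLeft ℂ (X : Polynomial ℂ)).comp (Polynomial.derivative)

lemma theta_apply (p : Polynomial ℂ) : theta p = X * derivative p := rfl

lemma theta_monomial (c : ℂ) (w : ℕ) :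
    theta (Polynomial.C c * X ^ w) = Polynomial.C ((w : ℂ)) * (Polynomial.C c * X ^ w) := by
  rw [theta_apply, derivative_C_mul, derivative_X_pow]
  cases w with
  | zero => simp
  | succ w =>
      rw [Nat.add_sub_cancel, pow_succ]
      ring

lemma theta_pow_monomial (k : ℕ) (c : ℂ) (w : ℕ) :
    (theta ^ k) (Polynomial.C c * X ^ w) = Polynomial.C ((w : ℂ) ^ k) * (Polynomial.C c * X ^ w) := by
  induction k with
  | zero => simp
  | succ k ih =>
      rw [pow_succ', Module.End.mul_apply, ih, ← mul_assoc, ← Polynomial.C_mul, theta_monomial,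
        ← mul_assoc, ← Polynomial.C_mul]
      rw [show (w:ℂ) * ((w:ℂ)^k * c) = (w:ℂ)^(k+1) * c by ring, Polynomial.C_mul, mul_assoc]

lemma theta_factor (m : ℕ) (g : Polynomial ℂ) :
    ∃ h, theta ((1 - X) ^ (m + 1) * g) = (1 - X) ^ m * h := by
  refine ⟨-(X * (Polynomial.C ((m : ℂ) + 1) * g)) + X * ((1 - X) * derivative g), ?_⟩
  rw [theta_apply, derivative_mul, derivative_pow]
  have h1 : derivative (1 - X : Polynomial ℂ) = -1 := by simp
  rw [h1, pow_succ]
  push_cast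
  ring

lemma eval_one_theta_pow (k : ℕ) : ∀ (m : ℕ) (g : Polynomial ℂ), k < m →
    Polynomial.eval 1 ((theta ^ k) ((1 - X) ^ m * g)) = 0 := by
  induction k with
  | zero =>
      intro m g hm
      obtain ⟨m', rfl⟩ := Nat.exists_eq_succ_of_ne_zero (by omega : m ≠ 0)
      simp [pow_succ]
  | succ k ih =>
      intro m g hm
      obtain ⟨m', rfl⟩ := Nat.exists_eq_succ_of_ne_zero (by omega : m ≠ 0)
      obtain ⟨h, hh⟩ := theta_factor m' g
      rw [pow_succ, Module.End.mul_apply, hh]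
      exact ih m' h (by omega)

/-- Key vanishing: if `deg α < Lee weight of y`, the twisted character sum vanishes. -/
lemma key_vanish (n : ℕ) (α : Polynomial ℂ) (y : Fin n → ZMod 4)
    (h : α.natDegree < ∑ j, leeWt (y j)) :
    ∑ v : Fin n → ZMod 4,
      α.eval ((∑ j, leeWt (v j) : ℕ) : ℂ) * chi (∑ j, y j * v j) = 0 := by
  set m := ∑ j, leeWt (y j) with hm
  have hθ : ∀ k : ℕ,
      (∑ v : Fin n → ZMod 4, ((∑ j, leeWt (v j) : ℕ) : ℂ) ^ k * chi (∑ j, y j * v j))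
        = Polynomial.eval 1 ((theta ^ k) ((1 + X) ^ (2 * n - m) * (1 - X) ^ m)) := by
    intro k
    rw [← prod_form, map_sum]
    rw [Polynomial.eval_finset_sum]
    apply Finset.sum_congr rfl
    intro v _
    rw [theta_pow_monomial]
    rw [Polynomial.eval_mul, Polynomial.eval_mul, Polynomial.eval_C, Polynomial.eval_C,
      Polynomial.eval_pow, Polynomial.eval_X, one_pow, mul_one]
  have hzero : ∀ k : ℕ, k ≤ α.natDegree →
      Polynomial.eval 1 ((theta ^ k) ((1 + X) ^ (2 * n - m) * (1 - X) ^ m)) = 0 := by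
    intro k hk
    rw [mul_comm ((1 + X : Polynomial ℂ) ^ (2 * n - m))]
    exact eval_one_theta_pow k m _ (by omega)
  calc ∑ v : Fin n → ZMod 4, α.eval ((∑ j, leeWt (v j) : ℕ) : ℂ) * chi (∑ j, y j * v j)
      = ∑ v : Fin n → ZMod 4, ∑ k ∈ Finset.range (α.natDegree + 1),
          α.coeff k * (((∑ j, leeWt (v j) : ℕ) : ℂ) ^ k * chi (∑ j, y j * v j)) := by
        apply Finset.sum_congr rfl
        intro v _
        rw [Polynomial.eval_eq_sum_range, Finset.sum_mul]
        apply Finset.sum_congr rfl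
        intro k _
        ring
    _ = ∑ k ∈ Finset.range (α.natDegree + 1),
          α.coeff k * ∑ v : Fin n → ZMod 4,
            (((∑ j, leeWt (v j) : ℕ) : ℂ) ^ k * chi (∑ j, y j * v j)) := by
        rw [Finset.sum_comm]
        apply Finset.sum_congr rfl
        intro k _
        rw [Finset.mul_sum]
    _ = 0 := by
        apply Finset.sum_eq_zero
        intro k hk
        rw [hθ, hzero k (by simpa using Nat.lt_succ_iff.mp (Finset.mem_range.mp hk))]
        ring
end DelsarteAux

/-- Delsarte bound: the Lee covering radius of `C` is at most the number of distinct
nonzero Lee weights occurring among codewords of the dual code `C⊥`. -/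
theorem stmt3 (n : ℕ) (C : Submodule (ZMod 4) (Fin n → ZMod 4)) :
    covRadLee (C : Set (Fin n → ZMod 4)) ≤
      Set.ncard {i : ℕ | i ≠ 0 ∧
        ∃ x ∈ dualCode (C : Set (Fin n → ZMod 4)), (∑ j, leeWt (x j)) = i} := by
  classical
  set D := {i : ℕ | i ≠ 0 ∧
    ∃ x ∈ dualCode (C : Set (Fin n → ZMod 4)), (∑ j, leeWt (x j)) = i} with hDdef
  have hDfin : D.Finite := by
    apply (Set.finite_Iic (2 * n)).subset
    rintro i ⟨hi0, x, hx, rfl⟩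
    simp only [Set.mem_Iic]
    calc ∑ j, leeWt (x j) ≤ ∑ _j : Fin n, 2 :=
          Finset.sum_le_sum (fun j _ => leeWt_le_two (x j))
      _ = 2 * n := by simp [mul_comm]
  set s := D.ncard with hs
  have hcard : hDfin.toFinset.card = s := (Set.ncard_eq_toFinset_card D hDfin).symm
  set Df := hDfin.toFinset with hDf
  set α : Polynomial ℂ := ∏ d ∈ Df, (Polynomial.C (d : ℂ) - X) with hα
  have hdeg : α.natDegree ≤ s := by
    have h1 : α.natDegree ≤ ∑ d ∈ Df, (Polynomial.C (d : ℂ) - X).natDegree :=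
      Polynomial.natDegree_prod_le _ _
    have h2 : (∑ d ∈ Df, (Polynomial.C (d : ℂ) - X).natDegree) ≤ ∑ _d ∈ Df, 1 := by
      apply Finset.sum_le_sum
      intro d _
      refine le_trans (Polynomial.natDegree_sub_le _ _) ?_
      simp
    have h3 : (∑ _d ∈ Df, (1:ℕ)) = Df.card := by simp
    omega
  have hα0 : α.eval 0 ≠ 0 := by
    rw [hα, Polynomial.eval_prod]
    apply Finset.prod_ne_zero_iff.mpr
    intro d hd
    simp only [Polynomial.eval_sub, Polynomial.eval_C, Polynomial.eval_X, sub_zero]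
    exact Nat.cast_ne_zero.mpr (hDfin.mem_toFinset.mp hd).1
  have hαD : ∀ i ∈ D, α.eval (i : ℂ) = 0 := by
    intro i hi
    rw [hα, Polynomial.eval_prod]
    apply Finset.prod_eq_zero (hDfin.mem_toFinset.mpr hi)
    simp
  have key : ∀ u : Fin n → ZMod 4, sInf (dLee u '' (C : Set (Fin n → ZMod 4))) ≤ s := by
    intro u
    by_contra hcon
    push_neg at hcon
    have hall : ∀ c ∈ (C : Set (Fin n → ZMod 4)), s < dLee u c := by
      intro c hc
      exact lt_of_lt_of_le hcon (Nat.sInf_le ⟨c, hc, rfl⟩)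
    set CF : Finset (Fin n → ZMod 4) := (Set.toFinite (C : Set (Fin n → ZMod 4))).toFinset
      with hCF
    have hmemCF : ∀ c, c ∈ CF ↔ c ∈ (C : Set (Fin n → ZMod 4)) := fun c =>
      Set.Finite.mem_toFinset _
    have T1 : ∑ c ∈ CF, ∑ v : Fin n → ZMod 4,
        α.eval ((∑ j, leeWt (v j) : ℕ) : ℂ) * chi (∑ j, (u - c) j * v j) = 0 := by
      apply Finset.sum_eq_zero
      intro c hc
      apply key_vanish
      have hlt : s < ∑ j, leeWt ((u - c) j) := by
        have h2 := hall c ((hmemCF c).mp hc)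
        simpa [dLee] using h2
      exact lt_of_le_of_lt hdeg hlt
    have T2 : ∑ c ∈ CF, ∑ v : Fin n → ZMod 4,
        α.eval ((∑ j, leeWt (v j) : ℕ) : ℂ) * chi (∑ j, (u - c) j * v j)
          = α.eval 0 * CF.card := by
      rw [Finset.sum_comm]
      have hv : ∀ v : Fin n → ZMod 4,
          (∑ c ∈ CF, α.eval ((∑ j, leeWt (v j) : ℕ) : ℂ) * chi (∑ j, (u - c) j * v j))
            = if v = 0 then α.eval 0 * CF.card else 0 := by
        intro v
        by_cases hv0 : v = 0
        · subst hv0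
          simp [chi_zero, leeWt, Finset.sum_const, mul_comm]
        · rw [if_neg hv0]
          by_cases hdual : v ∈ dualCode (C : Set (Fin n → ZMod 4))
          · -- the α factor vanishes
            have hw0 : (∑ j, leeWt (v j)) ≠ 0 := by
              intro h0
              apply hv0
              funext j
              exact leeWt_eq_zero ((Finset.sum_eq_zero_iff.mp h0) j (Finset.mem_univ j))
            have hz : α.eval ((∑ j, leeWt (v j) : ℕ) : ℂ) = 0 :=
              hαD _ ⟨hw0, v, hdual, rfl⟩
            apply Finset.sum_eq_zero
            intro c _
            rw [hz, zero_mul]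
          · -- the character sum over the code vanishes
            rw [← Finset.mul_sum]
            have hS : (∑ c ∈ CF, chi (∑ j, (u - c) j * v j)) = 0 := by
              simp only [dualCode, Set.mem_setOf_eq] at hdual
              push_neg at hdual
              obtain ⟨c0, hc0C, hc0⟩ := hdual
              set S := ∑ c ∈ CF, chi (∑ j, (u - c) j * v j) with hSdef
              have hstep : S = chi (-(∑ j, c0 j * v j)) * S := by
                rw [hSdef, Finset.mul_sum]
                refine Finset.sum_bij' (fun c _ => c - c0) (fun c _ => c + c0)
                  ?_ ?_ ?_ ?_ ?_
                · intro a ha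
                  exact (hmemCF _).mpr (C.sub_mem ((hmemCF a).mp ha) hc0C)
                · intro a ha
                  exact (hmemCF _).mpr (C.add_mem ((hmemCF a).mp ha) hc0C)
                · intro a ha; simp
                · intro a ha; simp
                · intro a ha
                  rw [← chi_add]
                  congr 1
                  have hpt : ∀ j, (u - (a - c0)) j * v j = (u - a) j * v j + c0 j * v j := by
                    intro j; simp only [Pi.sub_apply]; ring
                  rw [Finset.sum_congr rfl (fun j _ => hpt j), Finset.sum_add_distrib]
                  ring
              have hne : chi (-(∑ j, c0 j * v j)) ≠ 1 := by
                apply chi_ne_one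
                simp only [ne_eq, neg_eq_zero]
                intro h0
                apply hc0
                rw [← h0]
                exact Finset.sum_congr rfl (fun j _ => mul_comm _ _)
              have := hstep
              have h2 : (chi (-(∑ j, c0 j * v j)) - 1) * S = 0 := by
                rw [sub_mul, one_mul, ← hstep, sub_self]
              rcases mul_eq_zero.mp h2 with h3 | h3
              · exact absurd (sub_eq_zero.mp h3) hne
              · exact h3
            rw [hS, mul_zero]
      rw [Finset.sum_congr rfl (fun v _ => hv v), Finset.sum_ite_eq' Finset.univ 0
        (fun _ => α.eval 0 * CF.card)]
      simp
    have hcard0 : (CF.card : ℂ) ≠ 0 := by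
      have h0 : (0 : Fin n → ZMod 4) ∈ CF := (hmemCF 0).mpr C.zero_mem
      exact Nat.cast_ne_zero.mpr (Finset.card_pos.mpr ⟨0, h0⟩).ne'
    rw [T2] at T1
    exact (mul_ne_zero hα0 hcard0) T1
  apply csSup_le ⟨_, Set.mem_range_self 0⟩
  rintro b ⟨u, rfl⟩
  exact key u
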